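/- Let f : V' → V' be a linear endomorphism of a finite-dimensional complex vector space with f² = 0 and rk(f) ≤ dim(V), where V is another finite-dimensional complex vector space. Then there exist linear maps u₁ : V' → V and u₂ : V → V' such that u₂ ∘ u₁ = f and u₁ ∘ u₂ = 0. -/
import Mathlib

theorem stmt_2 (V V' : Type*) [AddCommGroup V] [Module ℂ V] [AddCommGroup V'] [Module ℂ V']
    [FiniteDimensional ℂ V] [FiniteDimensional ℂ V']
    (f : V' →ₗ[ℂ] V') (hf : f ∘ₗ f = 0)
    (hrk : Module.finrank ℂ (LinearMap.range f) ≤ Module.finrank ℂ V) :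
    ∃ (u₁ : V' →ₗ[ℂ] V) (u₂ : V →ₗ[ℂ] V'), u₂ ∘ₗ u₁ = f ∧ u₁ ∘ₗ u₂ = 0 := by
  set R := LinearMap.range f
  -- build an injective linear map j : R →ₗ V
  let b := Module.finBasis ℂ R
  let c := Module.finBasis ℂ V
  let e : Fin (Module.finrank ℂ R) → Fin (Module.finrank ℂ V) := Fin.castLE hrk
  let j : R →ₗ[ℂ] V :=
    (c.repr.symm.toLinearMap ∘ₗ Finsupp.lmapDomain ℂ ℂ e) ∘ₗ b.repr.toLinearMap
  have hj : Function.Injective j := by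
    simp only [j, LinearMap.coe_comp, LinearEquiv.coe_toLinearMap]
    exact (c.repr.symm.injective.comp
      ((Finsupp.mapDomain_injective (Fin.castLE_injective _)).comp
        (fun a b h => h))).comp b.repr.injective
  obtain ⟨p, hp⟩ := j.exists_leftInverse_of_injective (LinearMap.ker_eq_bot.mpr hj)
  refine ⟨j ∘ₗ f.rangeRestrict, R.subtype ∘ₗ p, ?_, ?_⟩
  · ext x
    have := LinearMap.congr_fun hp (f.rangeRestrict x)
    simp only [LinearMap.comp_apply, LinearMap.id_apply] at this ⊢
    rw [this]
    rfl
  · ext x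
    simp only [LinearMap.comp_apply, LinearMap.zero_apply]
    have : f.rangeRestrict (R.subtype (p x)) = 0 := by
      obtain ⟨y, hy⟩ := (p x).2
      apply Subtype.ext
      simp only [LinearMap.rangeRestrict, LinearMap.codRestrict_apply]
      show f (R.subtype (p x)) = 0
      rw [Submodule.coe_subtype, ← hy, ← LinearMap.comp_apply, hf, LinearMap.zero_apply]
    rw [this, map_zero]
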